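/- For every n ≥ 1 and every r ∈ [0,1) there exists a complex n×n matrix T with ‖T‖ ≤ 1 and spectral radius ρ(T) ≤ r such that ‖(−I − T)^{-1}‖ ≥ (1/2)·((1+r)/(1−r))·n + 1/2. -/

import Mathlib

open Finset

namespace Stmt8Aux

/-- The lower shift matrix. -/
def S (n : ℕ) : Matrix (Fin n) (Fin n) ℂ :=
  Matrix.of fun i j => if (i : ℕ) = (j : ℕ) + 1 then 1 else 0

lemma S_mul_apply {n : ℕ} (A : Matrix (Fin n) (Fin n) ℂ) (i j : Fin n) :
    (S n * A) i j =
      if h : 0 < (i : ℕ) then A ⟨(i : ℕ) - 1, lt_of_le_of_lt (Nat.sub_le _ _) i.isLt⟩ j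
      else 0 := by
  rw [Matrix.mul_apply]
  split_ifs with h
  · refine Finset.sum_eq_single_of_mem ⟨(i : ℕ) - 1, lt_of_le_of_lt (Nat.sub_le _ _) i.isLt⟩
      (Finset.mem_univ _) (fun c _ hc => ?_) |>.trans ?_
    · have : ¬ ((i : ℕ) = (c : ℕ) + 1) := by
        intro hh
        apply hc
        apply Fin.ext
        simp only []
        omega
      simp [S, this]
    · have h1 : (i : ℕ) = ((i : ℕ) - 1) + 1 := by omega
      show (if (i : ℕ) = ((i : ℕ) - 1) + 1 then (1:ℂ) else 0) * _ = _
      rw [if_pos h1, one_mul]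
  · refine Finset.sum_eq_zero fun c _ => ?_
    have h1 : ¬ ((i : ℕ) = (c : ℕ) + 1) := by omega
    show (if (i : ℕ) = (c : ℕ) + 1 then (1:ℂ) else 0) * _ = 0
    rw [if_neg h1, zero_mul]

lemma S_mulVec {n : ℕ} (y : Fin n → ℂ) (i : Fin n) :
    (S n).mulVec y i =
      if h : 0 < (i : ℕ) then y ⟨(i : ℕ) - 1, lt_of_le_of_lt (Nat.sub_le _ _) i.isLt⟩
      else 0 := by
  rw [Matrix.mulVec, dotProduct]
  split_ifs with h
  · refine Finset.sum_eq_single_of_mem ⟨(i : ℕ) - 1, lt_of_le_of_lt (Nat.sub_le _ _) i.isLt⟩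
      (Finset.mem_univ _) (fun c _ hc => ?_) |>.trans ?_
    · have : ¬ ((i : ℕ) = (c : ℕ) + 1) := by
        intro hh
        apply hc
        apply Fin.ext
        simp only []
        omega
      simp [S, this]
    · have h1 : (i : ℕ) = ((i : ℕ) - 1) + 1 := by omega
      show (if (i : ℕ) = ((i : ℕ) - 1) + 1 then (1:ℂ) else 0) * _ = _
      rw [if_pos h1, one_mul]
  · refine Finset.sum_eq_zero fun c _ => ?_
    have h1 : ¬ ((i : ℕ) = (c : ℕ) + 1) := by omega
    show (if (i : ℕ) = (c : ℕ) + 1 then (1:ℂ) else 0) * _ = 0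
    rw [if_neg h1, zero_mul]

lemma S_pow_apply {n : ℕ} (k : ℕ) (i j : Fin n) :
    (S n ^ k) i j = if (i : ℕ) = (j : ℕ) + k then 1 else 0 := by
  induction k generalizing i with
  | zero =>
    rw [pow_zero, Matrix.one_apply]
    congr 1
    simp [Fin.ext_iff]
  | succ k ih =>
    rw [pow_succ', S_mul_apply]
    rcases Nat.eq_zero_or_pos (i : ℕ) with h | h
    · rw [dif_neg (by omega), if_neg (by omega)]
    · rw [dif_pos h, ih]
      have hiff : (((⟨(i : ℕ) - 1, lt_of_le_of_lt (Nat.sub_le _ _) i.isLt⟩ : Fin n) : ℕ)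
          = (j : ℕ) + k) ↔ ((i : ℕ) = (j : ℕ) + (k + 1)) := by
        simp only []
        omega
      exact if_congr hiff rfl rfl

lemma S_pow_n {n : ℕ} : S n ^ n = 0 := by
  ext i j
  rw [S_pow_apply]
  exact if_neg (by omega)

lemma S_pow_mulVec_one {n : ℕ} (k : ℕ) :
    (S n ^ k).mulVec (fun _ => (1 : ℂ)) = fun i : Fin n => if k ≤ (i : ℕ) then (1:ℂ) else 0 := by
  induction k with
  | zero =>
    funext i
    simp [Matrix.one_mulVec]
  | succ k ih =>
    funext i
    rw [pow_succ', ← Matrix.mulVec_mulVec, ih, S_mulVec]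
    rcases Nat.eq_zero_or_pos (i : ℕ) with h | h
    · rw [dif_neg (by omega), if_neg (by omega)]
    · rw [dif_pos h]
      have hiff : (k ≤ (((⟨(i : ℕ) - 1, lt_of_le_of_lt (Nat.sub_le _ _) i.isLt⟩ : Fin n)) : ℕ))
          ↔ (k + 1 ≤ (i : ℕ)) := by
        simp only []
        omega
      exact if_congr hiff rfl rfl

noncomputable section

variable (n : ℕ) (r : ℝ)

def PP : Matrix (Fin n) (Fin n) ℂ := ∑ k ∈ range n, (-((r : ℂ) • S n)) ^ k
def BB : Matrix (Fin n) (Fin n) ℂ := 1 + (r : ℂ) • S n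
def AA : Matrix (Fin n) (Fin n) ℂ := S n + (r : ℂ) • 1
def QQ : Matrix (Fin n) (Fin n) ℂ := ∑ k ∈ range n, S n ^ k
def TT : Matrix (Fin n) (Fin n) ℂ := -(AA n r * PP n r)
def CC : Matrix (Fin n) (Fin n) ℂ := (-(1 - (r : ℂ))⁻¹) • (BB n r * QQ n)

lemma neg_smul_pow_n : (-((r : ℂ) • S n)) ^ n = 0 := by
  rw [neg_pow, smul_pow, S_pow_n, smul_zero, mul_zero]

lemma PB : PP n r * BB n r = 1 := by
  have h := geom_sum_mul (-((r : ℂ) • S n)) n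
  rw [neg_smul_pow_n] at h
  have hBB : BB n r = -((-((r : ℂ) • S n)) - 1) := by
    rw [BB, neg_sub, sub_neg_eq_add, add_comm]
  rw [hBB, mul_neg, PP, h]
  rw [zero_sub, neg_neg]

lemma BP : BB n r * PP n r = 1 := mul_eq_one_comm.mp (PB n r)

lemma Q1 : QQ n * (1 - S n) = 1 := by
  have h := geom_sum_mul (S n) n
  rw [S_pow_n] at h
  have : QQ n * (1 - S n) = -(QQ n * ((S n) - 1)) := by
    rw [mul_sub, mul_sub, neg_sub, mul_one]
  rw [this, QQ, h, zero_sub, neg_neg]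

lemma oneQ : (1 - S n) * QQ n = 1 := mul_eq_one_comm.mp (Q1 n)

lemma one_add_T : (1 : Matrix (Fin n) (Fin n) ℂ) + TT n r = ((1 - (r:ℂ)) • (1 - S n)) * PP n r := by
  have hBA : BB n r - AA n r = (1 - (r:ℂ)) • (1 - S n) := by
    rw [BB, AA, smul_sub, sub_smul, sub_smul, one_smul, one_smul]
    abel
  calc (1 : Matrix (Fin n) (Fin n) ℂ) + TT n r
      = BB n r * PP n r - AA n r * PP n r := by rw [BP, TT]; abel
    _ = (BB n r - AA n r) * PP n r := by rw [Matrix.sub_mul]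
    _ = ((1 - (r:ℂ)) • (1 - S n)) * PP n r := by rw [hBA]

lemma neg_one_sub_T :
    -(1 : Matrix (Fin n) (Fin n) ℂ) - TT n r = (((r:ℂ) - 1) • (1 - S n)) * PP n r := by
  have h := one_add_T n r
  have h2 : -(1 : Matrix (Fin n) (Fin n) ℂ) - TT n r
      = -(((1 - (r:ℂ)) • (1 - S n)) * PP n r) := by
    rw [← h]; abel
  rw [h2, ← Matrix.neg_mul, ← neg_smul, neg_sub]

lemma one_sub_c_ne (hr1 : r < 1) : (1 : ℂ) - (r : ℂ) ≠ 0 := by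
  have : ((1 - r : ℝ) : ℂ) ≠ 0 := Complex.ofReal_ne_zero.mpr (by linarith)
  push_cast at this
  exact this

lemma key_inv (hr1 : r < 1) :
    (-(1 : Matrix (Fin n) (Fin n) ℂ) - TT n r) * CC n r = 1 := by
  have hc := one_sub_c_ne r hr1
  rw [neg_one_sub_T, CC]
  rw [mul_smul_comm, smul_mul_assoc, smul_mul_assoc, smul_smul]
  have hscal : -(1 - (r:ℂ))⁻¹ * ((r:ℂ) - 1) = 1 := by
    field_simp
    ring
  rw [hscal, one_smul]
  calc (1 - S n) * PP n r * (BB n r * QQ n)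
      = (1 - S n) * ((PP n r * BB n r) * QQ n) := by
        rw [Matrix.mul_assoc, Matrix.mul_assoc]
    _ = (1 - S n) * QQ n := by rw [PB, Matrix.one_mul]
    _ = 1 := oneQ n

lemma T_add_smul_one :
    TT n r + (r:ℂ) • 1 = (((r:ℂ)^2 - 1) • S n) * PP n r := by
  have h1 : (r:ℂ) • (1 : Matrix (Fin n) (Fin n) ℂ) = ((r:ℂ) • BB n r) * PP n r := by
    rw [Matrix.smul_mul, BP]
  have h2 : (r:ℂ) • BB n r - AA n r = ((r:ℂ)^2 - 1) • S n := by
    rw [BB, AA, smul_add, smul_smul, sub_smul, one_smul, ← pow_two]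
    abel
  rw [TT, h1, neg_add_eq_sub, ← Matrix.sub_mul, h2]

lemma S_commute_P : Commute (S n) (PP n r) := by
  refine Commute.sum_right _ _ _ fun k _ => Commute.pow_right ?_ k
  exact (((Commute.refl (S n)).smul_right ((r:ℂ)))).neg_right

lemma nilp : IsNilpotent (TT n r + (r:ℂ) • 1) := by
  refine ⟨n, ?_⟩
  rw [T_add_smul_one, smul_mul_assoc, smul_pow, (S_commute_P n r).mul_pow, S_pow_n,
    Matrix.zero_mul, smul_zero]

lemma spec_sub : spectrum ℂ (TT n r) ⊆ {-(r:ℂ)} := by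
  intro z hz
  simp only [Set.mem_singleton_iff]
  by_contra hne
  rw [spectrum.mem_iff] at hz
  apply hz
  have hzc : z + (r:ℂ) ≠ 0 := fun h => hne (by linear_combination h)
  have hu : IsUnit ((z + (r:ℂ)) • (1 : Matrix (Fin n) (Fin n) ℂ)) := by
    rw [Algebra.algebraMap_eq_smul_one (R := ℂ) (A := Matrix (Fin n) (Fin n) ℂ) (z + r)
      |>.symm]
    exact (isUnit_iff_ne_zero.mpr hzc).map (algebraMap ℂ (Matrix (Fin n) (Fin n) ℂ))
  have hcomm : Commute (-(TT n r + (r:ℂ) • 1)) ((z + (r:ℂ)) • (1 : Matrix (Fin n) (Fin n) ℂ)) :=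
    ((Commute.one_right _).smul_right _)
  have hun := ((nilp n r).neg).isUnit_add_left_of_commute hu hcomm
  have heq : (z + (r:ℂ)) • (1 : Matrix (Fin n) (Fin n) ℂ) + -(TT n r + (r:ℂ) • 1)
      = algebraMap ℂ (Matrix (Fin n) (Fin n) ℂ) z - TT n r := by
    rw [Algebra.algebraMap_eq_smul_one, add_smul]
    abel
  rwa [heq] at hun

lemma coord {n : ℕ} (A : Matrix (Fin n) (Fin n) ℂ) (y : EuclideanSpace ℂ (Fin n)) (i : Fin n) :
    (Matrix.toEuclideanCLM (𝕜 := ℂ) A) y i = A.mulVec y i := rfl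

lemma shift_le {m : ℕ} (y : EuclideanSpace ℂ (Fin (m + 1))) :
    ‖(Matrix.toEuclideanCLM (𝕜 := ℂ) (S (m + 1))) y‖ ≤ ‖y‖ := by
  rw [EuclideanSpace.norm_eq, EuclideanSpace.norm_eq]
  apply Real.sqrt_le_sqrt
  calc ∑ i, ‖(Matrix.toEuclideanCLM (𝕜 := ℂ) (S (m + 1))) y i‖ ^ 2
      = ∑ i : Fin (m + 1), ‖(S (m + 1)).mulVec y i‖ ^ 2 := by
        refine Finset.sum_congr rfl fun i _ => by rw [coord]
    _ = ∑ i : Fin m, ‖y i.castSucc‖ ^ 2 := by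
        rw [Fin.sum_univ_succ]
        have h0 : (S (m + 1)).mulVec y (0 : Fin (m + 1)) = 0 := by
          rw [S_mulVec]; exact dif_neg (by simp)
        rw [h0]
        simp only [norm_zero, ne_eq, OfNat.ofNat_ne_zero, not_false_eq_true, zero_pow, zero_add]
        refine Finset.sum_congr rfl fun i _ => ?_
        rw [S_mulVec]
        rw [dif_pos (by simp)]
        congr 1
    _ ≤ ∑ i : Fin (m + 1), ‖y i‖ ^ 2 := by
        rw [Fin.sum_univ_castSucc]
        have := sq_nonneg ‖y (Fin.last m)‖
        linarith

lemma key_norm {E : Type*} [NormedAddCommGroup E] [InnerProductSpace ℂ E] (u y : E) (r : ℝ)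
    (hr0 : 0 ≤ r) (hr1 : r ≤ 1) (hu : ‖u‖ ≤ ‖y‖) :
    ‖u + (r : ℂ) • y‖ ≤ ‖y + (r : ℂ) • u‖ := by
  rw [← Real.sqrt_sq (norm_nonneg (u + (r : ℂ) • y)),
    ← Real.sqrt_sq (norm_nonneg (y + (r : ℂ) • u))]
  apply Real.sqrt_le_sqrt
  have h1 := norm_add_sq (𝕜 := ℂ) u ((r : ℂ) • y)
  have h2 := norm_add_sq (𝕜 := ℂ) y ((r : ℂ) • u)
  rw [inner_smul_right] at h1 h2
  have hsym : (inner ℂ y u : ℂ) = starRingEnd ℂ (inner ℂ u y) := (inner_conj_symm y u).symm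
  have hre1 : RCLike.re ((r : ℂ) * inner ℂ u y) = r * RCLike.re (inner ℂ u y : ℂ) := by
    simp [Complex.mul_re]
  have hre2 : RCLike.re ((r : ℂ) * inner ℂ y u) = r * RCLike.re (inner ℂ u y : ℂ) := by
    rw [hsym]
    simp [Complex.mul_re, Complex.conj_re, Complex.conj_im, -inner_conj_symm]
  rw [hre1] at h1
  rw [hre2] at h2
  have hn1 : ‖(r : ℂ) • y‖ = r * ‖y‖ := by
    rw [norm_smul, Complex.norm_real, Real.norm_of_nonneg hr0]
  have hn2 : ‖(r : ℂ) • u‖ = r * ‖u‖ := by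
    rw [norm_smul, Complex.norm_real, Real.norm_of_nonneg hr0]
  rw [hn1] at h1
  rw [hn2] at h2
  have k1 : (0:ℝ) ≤ 1 - r ^ 2 := by nlinarith
  have k2 : (0:ℝ) ≤ ‖y‖ ^ 2 - ‖u‖ ^ 2 := by nlinarith [norm_nonneg u]
  nlinarith [mul_nonneg k1 k2]

lemma normT {m : ℕ} {r : ℝ} (hr0 : 0 ≤ r) (hr1 : r ≤ 1) :
    ‖Matrix.toEuclideanCLM (𝕜 := ℂ) (TT (m + 1) r)‖ ≤ 1 := by
  set f := Matrix.toEuclideanCLM (𝕜 := ℂ) (n := Fin (m + 1)) with hf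
  apply ContinuousLinearMap.opNorm_le_bound _ zero_le_one
  intro x
  rw [one_mul]
  set y := f (PP (m + 1) r) x with hy
  have hxy : f (BB (m + 1) r) y = x := by
    rw [hy, ← ContinuousLinearMap.mul_apply, ← map_mul, BP, map_one,
      ContinuousLinearMap.one_apply]
  have hTx : f (TT (m + 1) r) x = -(f (AA (m + 1) r) y) := by
    rw [TT, map_neg, map_mul, ContinuousLinearMap.neg_apply, ContinuousLinearMap.mul_apply, hy]
  rw [hTx, norm_neg]
  have hA : f (AA (m + 1) r) y = f (S (m + 1)) y + (r:ℂ) • y := by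
    rw [AA, map_add, map_smul, map_one, ContinuousLinearMap.add_apply,
      ContinuousLinearMap.smul_apply, ContinuousLinearMap.one_apply]
  have hB : f (BB (m + 1) r) y = y + (r:ℂ) • (f (S (m + 1)) y) := by
    rw [BB, map_add, map_smul, map_one, ContinuousLinearMap.add_apply,
      ContinuousLinearMap.smul_apply, ContinuousLinearMap.one_apply]
  rw [hA, ← hxy, hB]
  exact key_norm _ _ r hr0 hr1 (shift_le y)

lemma sum_mulVec {n : ℕ} {s : Finset ℕ} (A : ℕ → Matrix (Fin n) (Fin n) ℂ) (v : Fin n → ℂ) :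
    (∑ k ∈ s, A k).mulVec v = ∑ k ∈ s, (A k).mulVec v := by
  funext i
  simp only [Matrix.mulVec, dotProduct, Finset.sum_apply, Matrix.sum_apply,
    Finset.sum_mul]
  rw [Finset.sum_comm]

lemma Q_mulVec_one {n : ℕ} :
    (QQ n).mulVec (fun _ => (1:ℂ)) = fun i : Fin n => ((i:ℕ) + 1 : ℂ) := by
  funext i
  rw [QQ, sum_mulVec]
  have h1 : ∀ k ∈ range n, (S n ^ k).mulVec (fun _ => (1:ℂ)) i
      = if k ∈ range ((i:ℕ) + 1) then (1:ℂ) else 0 := by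
    intro k _
    rw [S_pow_mulVec_one]
    exact if_congr (by simp [Nat.lt_succ_iff]) rfl rfl
  rw [Finset.sum_apply, Finset.sum_congr rfl h1, Finset.sum_ite_mem]
  have h2 : range n ∩ range ((i:ℕ) + 1) = range ((i:ℕ) + 1) :=
    Finset.inter_eq_right.mpr (Finset.range_subset_range.mpr i.isLt)
  rw [h2, Finset.sum_const, Finset.card_range, nsmul_eq_mul, mul_one]
  push_cast
  ring

lemma M_mulVec_one {n : ℕ} (r : ℝ) :
    (BB n r * QQ n).mulVec (fun _ => (1:ℂ))
      = fun i : Fin n => 1 + (1 + (r:ℂ)) * ((i:ℕ) : ℂ) := by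
  funext i
  rw [← Matrix.mulVec_mulVec, Q_mulVec_one, BB, Matrix.add_mulVec, Matrix.one_mulVec,
    Matrix.smul_mulVec]
  have hs : (S n).mulVec (fun j : Fin n => ((j:ℕ) + 1 : ℂ)) i = ((i:ℕ) : ℂ) := by
    rw [S_mulVec]
    split_ifs with h
    · have hval : (((⟨(i:ℕ) - 1, lt_of_le_of_lt (Nat.sub_le _ _) i.isLt⟩ : Fin n)) : ℕ)
          = (i:ℕ) - 1 := rfl
      rw [hval]
      have : ((i:ℕ) - 1) + 1 = (i:ℕ) := by omega
      exact_mod_cast congrArg (Nat.cast : ℕ → ℂ) this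
    · have : (i:ℕ) = 0 := by omega
      rw [this]
      simp
  show ((i:ℕ) + 1 : ℂ) + (r:ℂ) • ((S n).mulVec (fun j : Fin n => ((j:ℕ) + 1 : ℂ)) i)
      = 1 + (1 + (r:ℂ)) * ((i:ℕ) : ℂ)
  rw [hs, smul_eq_mul]
  ring

end

end Stmt8Aux

/-- The operator norm of a complex `n × n` matrix induced by the Euclidean norm on `ℂⁿ`. -/
noncomputable def matNorm {n : ℕ} (T : Matrix (Fin n) (Fin n) ℂ) : ℝ :=
  ‖Matrix.toEuclideanCLM (𝕜 := ℂ) T‖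

set_option synthInstance.maxHeartbeats 1000000 in
set_option maxHeartbeats 1000000 in
theorem stmt8 (n : ℕ) (hn : 1 ≤ n) (r : ℝ) (hr : r ∈ Set.Ico (0 : ℝ) 1) :
    ∃ T : Matrix (Fin n) (Fin n) ℂ, matNorm T ≤ 1 ∧
      spectralRadius ℂ T ≤ ENNReal.ofReal r ∧
      IsUnit (-(1 : Matrix (Fin n) (Fin n) ℂ) - T) ∧
      (1 / 2) * ((1 + r) / (1 - r)) * n + 1 / 2 ≤
        matNorm (-(1 : Matrix (Fin n) (Fin n) ℂ) - T)⁻¹ := by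
  obtain ⟨hr0, hr1⟩ := hr
  obtain ⟨m, rfl⟩ : ∃ m, n = m + 1 := ⟨n - 1, by omega⟩
  refine ⟨Stmt8Aux.TT (m + 1) r, ?_, ?_, ?_, ?_⟩
  · exact Stmt8Aux.normT hr0 hr1.le
  · refine iSup₂_le fun z hz => ?_
    have hz' : z = -(r:ℂ) := Stmt8Aux.spec_sub (m + 1) r hz
    subst hz'
    rw [nnnorm_neg, Complex.nnnorm_real]
    exact le_of_eq (Real.enorm_eq_ofReal hr0)
  · have hkey := Stmt8Aux.key_inv (m + 1) r hr1
    exact ⟨⟨_, Stmt8Aux.CC (m + 1) r, hkey, mul_eq_one_comm.mp hkey⟩, rfl⟩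
  · have hkey := Stmt8Aux.key_inv (m + 1) r hr1
    rw [Matrix.inv_eq_right_inv hkey]
    set f := Matrix.toEuclideanCLM (𝕜 := ℂ) (n := Fin (m + 1)) with hf
    set M := Stmt8Aux.BB (m + 1) r * Stmt8Aux.QQ (m + 1) with hM
    have h1r : (0:ℝ) < 1 - r := by linarith
    have hCC : matNorm (Stmt8Aux.CC (m + 1) r) = (1 - r)⁻¹ * ‖f M‖ := by
      show ‖f (Stmt8Aux.CC (m + 1) r)‖ = _
      rw [Stmt8Aux.CC, map_smul,
        norm_smul (-(1 - (r:ℂ))⁻¹) (f (Stmt8Aux.BB (m + 1) r * Stmt8Aux.QQ (m + 1)))]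
      congr 1
      rw [norm_neg, norm_inv]
      have hcast : (1 : ℂ) - (r:ℂ) = ((1 - r : ℝ) : ℂ) := by push_cast; ring
      rw [hcast, Complex.norm_real, Real.norm_of_nonneg h1r.le]
    rw [hCC]
    set e : EuclideanSpace ℂ (Fin (m + 1)) := WithLp.toLp 2 (fun _ => (1:ℂ)) with he
    have hMe : ∀ i, (f M) e i = 1 + (1 + (r:ℂ)) * ((i:ℕ) : ℂ) := by
      intro i
      rw [Stmt8Aux.coord]
      show M.mulVec (fun _ => (1:ℂ)) i = _
      rw [Stmt8Aux.M_mulVec_one]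
    have hinner : (inner ℂ e ((f M) e) : ℂ)
        = ∑ i : Fin (m + 1), (1 + (1 + (r:ℂ)) * ((i:ℕ):ℂ)) := by
      rw [PiLp.inner_apply]
      refine Finset.sum_congr rfl fun i _ => ?_
      rw [hMe i]
      simp [RCLike.inner_apply, he]
    have hre : RCLike.re (inner ℂ e ((f M) e) : ℂ)
        = ∑ i : Fin (m + 1), (1 + (1 + r) * ((i:ℕ):ℝ)) := by
      have hc : (∑ i : Fin (m + 1), (1 + (1 + (r:ℂ)) * ((i:ℕ):ℂ)))
          = (((∑ i : Fin (m + 1), (1 + (1 + r) * ((i:ℕ):ℝ))) : ℝ) : ℂ) := by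
        push_cast
        rfl
      rw [hinner, hc]
      simpa using Complex.ofReal_re _
    have hGauss : ∑ i : Fin (m + 1), ((i:ℕ):ℝ) = (m + 1) * m / 2 := by
      rw [Fin.sum_univ_eq_sum_range (fun k => (k:ℝ))]
      have h2 := Finset.sum_range_id_mul_two (m + 1)
      have h3 := congrArg (Nat.cast : ℕ → ℝ) h2
      push_cast at h3
      linarith
    have hSr : ∑ i : Fin (m + 1), (1 + (1 + r) * ((i:ℕ):ℝ))
        = ((m:ℝ) + 1) + (1 + r) * (((m:ℝ) + 1) * m / 2) := by
      rw [Finset.sum_add_distrib, Finset.sum_const, ← Finset.mul_sum, hGauss,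
        Finset.card_univ, Fintype.card_fin, nsmul_eq_mul, mul_one]
      push_cast
      ring
    have hnorm_e2 : ‖e‖ ^ 2 = (m:ℝ) + 1 := by
      rw [EuclideanSpace.norm_eq, Real.sq_sqrt (by positivity)]
      simp [he]
    have hre_le : RCLike.re (inner ℂ e ((f M) e) : ℂ) ≤ ‖f M‖ * ((m:ℝ) + 1) := by
      calc RCLike.re (inner ℂ e ((f M) e) : ℂ) ≤ ‖e‖ * ‖(f M) e‖ := re_inner_le_norm _ _
        _ ≤ ‖e‖ * (‖f M‖ * ‖e‖) :=
            mul_le_mul_of_nonneg_left ((f M).le_opNorm e) (norm_nonneg _)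
        _ = ‖f M‖ * (‖e‖ ^ 2) := by ring
        _ = ‖f M‖ * ((m:ℝ) + 1) := by rw [hnorm_e2]
    have hM_lb : 1 + (1 + r) * m / 2 ≤ ‖f M‖ := by
      rw [hre, hSr] at hre_le
      nlinarith [hre_le, (show (0:ℝ) ≤ (m:ℝ) by positivity), norm_nonneg (f M)]
    have hcast2 : (((m + 1 : ℕ)) : ℝ) = (m:ℝ) + 1 := by push_cast; ring
    rw [hcast2, inv_mul_eq_div, le_div_iff₀ h1r]
    have hexpand : ((1:ℝ)/2 * ((1 + r)/(1 - r)) * ((m:ℝ) + 1) + 1/2) * (1 - r)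
        = 1 + (1 + r) * m / 2 := by
      field_simp
      ring
    rw [hexpand]
    exact hM_lb
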